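/- Deadlock freedom from the lockset_ok invariant (abstract version): suppose at all times every thread t holding a lock ℓ satisfies: the set of locks held by other threads at the time t acquired ℓ, intersected with ℓ's future lockset, is empty, and every lock that t subsequently requests while holding ℓ belongs to ℓ's future lockset, and the future lockset only shrinks over time while locks held by others at acquisition time only come from the store existing at acquisition time. Then no cyclic deadlock among k ≥ 2 threads is possible. -/
import Mathlib


/-- Deadlock freedom from the `lockset_ok` invariant (abstract version).
Threads `t 0, …, t (k-1)` (k ≥ 2, distinct) form a putative deadlock cycle at
time τ: thread `t i` holds lock `ℓ (i+1)` continuously since its acquisition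
time `a i < τ` (timestamps all distinct) and requests lock `ℓ i` at τ.
Invariant I1: at time `a i`, no other thread held any lock in
`F i ∪ {ℓ (i+1)}`, where `F i` is the future lockset recorded at that
acquisition. Invariant I2: every lock requested by `t i` while still holding
`ℓ (i+1)` is in `F i`; in particular `ℓ i ∈ F i`. Then no such cycle exists. -/
theorem stmt_17 {T L : Type*}
    (held : ℕ → T → L → Prop)
    (k : ℕ)  -- number of threads is k + 2 ≥ 2
    (t : Fin (k + 2) → T) (ht : Function.Injective t)
    (ℓ : Fin (k + 2) → L) (F : Fin (k + 2) → Set L)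
    (a : Fin (k + 2) → ℕ) (ha : Function.Injective a)
    (τ : ℕ) (hτ : ∀ i, a i < τ)
    (hheld : ∀ i : Fin (k + 2), ∀ j, a i ≤ j → j ≤ τ → held j (t i) (ℓ (i + 1)))
    (hI1 : ∀ i : Fin (k + 2), ∀ t', t' ≠ t i → ∀ x ∈ F i ∪ {ℓ (i + 1)}, ¬ held (a i) t' x)
    (hI2 : ∀ i : Fin (k + 2), ℓ i ∈ F i) :
    False := by
  -- pick the index with the latest acquisition time
  obtain ⟨m, hm⟩ := Finset.exists_max_image Finset.univ a ⟨0, Finset.mem_univ 0⟩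
  have hmax : ∀ i, a i ≤ a m := fun i => hm.2 i (Finset.mem_univ i)
  -- predecessor of m in the cycle
  set p : Fin (k + 2) := m - 1 with hp
  have hpm : p + 1 = m := by simp [hp]
  have hpne : p ≠ m := by
    intro h
    have : (1 : Fin (k + 2)) = 0 := by
      have := sub_eq_self.mp (hp ▸ h)
      exact this
    simp [Fin.ext_iff, Nat.mod_eq_of_lt (show 1 < k + 2 by omega)] at this
  -- t p holds ℓ m at time a m
  have hheldp : held (a m) (t p) (ℓ m) := by
    have := hheld p (a m) (hmax p) (le_of_lt (hτ m))
    rwa [hpm] at this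
  exact hI1 m (t p) (fun h => hpne (ht h)) (ℓ m) (Or.inl (hI2 m)) hheldp
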